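/- Let λ ∈ V be a dominant weight, w ∈ W, and fix an index 1 ≤ i ≤ r such that ℓ(s_i w) = ℓ(w) − 1. Suppose μ' ∈ P_λ^w is maximal in the α_i-direction, i.e., for every k ∈ ℚ, μ' + k α_i ∈ P_λ^w implies k ≤ 0. Then μ' ∈ P_λ^{s_i w}; consequently, max((μ' + ℚα_i) ∩ P_λ^w) = μ' = max((μ' + ℚα_i) ∩ P_λ^{s_i w}), where the maxima are taken along the line μ' + ℚα_i. -/

import Mathlib

open scoped Classical

/-- Data of a root system with a fixed choice of simple roots: an ambient
`ℚ`-vector space `V`, a set of roots `Φ` with a distinguished subset `pos` of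
positive roots, a coroot functional `coroot β = ⟨·, β^∨⟩` for each root, and
simple roots `α 1, …, α r`. -/
structure RootData where
  r : ℕ
  V : Type
  [grp : AddCommGroup V]
  [mod : Module ℚ V]
  Φ : Set V
  pos : Set V
  coroot : V → Module.Dual ℚ V
  α : Fin r → V

attribute [instance] RootData.grp RootData.mod

namespace RootData

variable (R : RootData)

/-- The group of linear automorphisms of `V`, in which the Weyl group lives. -/
abbrev Aut : Type := R.V ≃ₗ[ℚ] R.V

/-- The linear map `v ↦ v - ⟨v, β^∨⟩ β`. -/
noncomputable def reflMap (β : R.V) : R.V →ₗ[ℚ] R.V :=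
  LinearMap.id - (R.coroot β).smulRight β

/-- The reflection `s_β` associated to a root `β`, as a linear automorphism. -/
noncomputable def s (β : R.V) : R.Aut :=
  if h : (R.reflMap β).comp (R.reflMap β) = LinearMap.id then
    LinearEquiv.ofLinear (R.reflMap β) (R.reflMap β) h h
  else LinearEquiv.refl ℚ R.V

/-- The simple reflections `s_i := s_{α_i}`. -/
noncomputable def S (i : Fin R.r) : R.Aut := R.s (R.α i)

/-- The Weyl group `W`, generated by the simple reflections. -/
noncomputable def weylGroup : Subgroup R.Aut := Subgroup.closure (Set.range R.S)

/-- The product `s_{i_1} ⋯ s_{i_k}` of a word in the simple reflections. -/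
noncomputable def wordProd (l : List (Fin R.r)) : R.Aut := (l.map R.S).prod

/-- The length function on `W`: least length of a word in the simple
reflections expressing the given element. -/
noncomputable def len (w : R.Aut) : ℕ :=
  sInf {n | ∃ l : List (Fin R.r), l.length = n ∧ R.wordProd l = w}

/-- A word is reduced if its length equals the length of its product. -/
def Reduced (l : List (Fin R.r)) : Prop := R.len (R.wordProd l) = l.length

/-- The Bruhat order on `W`: `u ≤ w` iff some reduced word for `w` has a
subword whose product is `u`. -/
def BruhatLE (u w : R.Aut) : Prop :=
  ∃ l : List (Fin R.r), R.Reduced l ∧ R.wordProd l = w ∧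
    ∃ l' : List (Fin R.r), l'.Sublist l ∧ R.wordProd l' = u

/-- Strict Bruhat order. -/
def BruhatLT (u w : R.Aut) : Prop := R.BruhatLE u w ∧ u ≠ w

/-- One step of the Demazure product: `s_i * w := max {w, s_i w}`. -/
noncomputable def dmulStep (i : Fin R.r) (x : R.Aut) : R.Aut :=
  if R.len x < R.len (R.S i * x) then R.S i * x else x

/-- Demazure product of a word in the simple reflections against `w`:
`s_{i_1} * (s_{i_2} * (⋯ * (s_{i_k} * w)))`. -/
noncomputable def dmulList (l : List (Fin R.r)) (w : R.Aut) : R.Aut :=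
  l.foldr R.dmulStep w

/-- The Demazure product `v * w` on the Weyl group, computed by choosing a
reduced word for `v` (it is independent of this choice). -/
noncomputable def dmul (v w : R.Aut) : R.Aut :=
  if h : ∃ l : List (Fin R.r), R.Reduced l ∧ R.wordProd l = v then
    R.dmulList h.choose w
  else v * w

/-- The parabolic subgroup `W_{P_i}` generated by the simple reflections
`s_j`, `j ≠ i`. -/
noncomputable def WPar (i : Fin R.r) : Subgroup R.Aut :=
  Subgroup.closure (R.S '' {j | j ≠ i})

/-- `W^{P_i}`: the set of minimal-length representatives of cosets of
`W/W_{P_i}`. -/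
def minReps (i : Fin R.r) : Set R.Aut :=
  {v | v ∈ R.weylGroup ∧ ∀ p ∈ R.WPar i, R.len v ≤ R.len (v * p)}

/-- `u` is the minimal-length representative of the coset `w W_{P_i}`. -/
def IsMinRep (i : Fin R.r) (u w : R.Aut) : Prop :=
  u ∈ R.minReps i ∧ u⁻¹ * w ∈ R.WPar i

/-- A weight is dominant if it pairs nonnegatively with every simple coroot. -/
def Dominant (lam : R.V) : Prop := ∀ i : Fin R.r, 0 ≤ R.coroot (R.α i) lam

/-- The dual action of the Weyl group on `V* `: `(u f)(v) = f(u⁻¹ v)`. -/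
noncomputable def dualAct (u : R.Aut) (f : Module.Dual ℚ R.V) : Module.Dual ℚ R.V :=
  f.comp (u.symm : R.V →ₗ[ℚ] R.V)

/-- The Demazure polytope `P_λ^w := conv {uλ : u ∈ W, u ≤ w}`. -/
noncomputable def demPolytope (lam : R.V) (w : R.Aut) : Set R.V :=
  convexHull ℚ {m | ∃ u : R.Aut, u ∈ R.weylGroup ∧ R.BruhatLE u w ∧ m = u lam}

/-- Membership in the weight lattice `X`. -/
def IsWeight (lam : R.V) : Prop := ∀ β ∈ R.Φ, ∃ m : ℤ, R.coroot β lam = (m : ℚ)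

/-- The root lattice `Q = ℤΦ`. -/
noncomputable def rootLattice : AddSubgroup R.V := AddSubgroup.closure R.Φ

/-- `w₀` is the longest element of the Weyl group. -/
def IsLongest (w₀ : R.Aut) : Prop :=
  w₀ ∈ R.weylGroup ∧ ∀ g ∈ R.weylGroup, R.len g ≤ R.len w₀

/-- The positive roots `Φ_{P_i}⁺ = Φ⁺ ∩ span {α_j : j ≠ i}` of the standard
Levi subsystem. -/
def parPos (i : Fin R.r) : Set R.V :=
  {η | η ∈ R.pos ∧ η ∈ Submodule.span ℚ (R.α '' {j | j ≠ i})}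

/-- The value `D_i (e^λ)` of the Demazure operator on a basis element of the
group ring `ℤ[X]`. -/
noncomputable def demOnBasis (i : Fin R.r) (lam : R.V) : R.V →₀ ℤ :=
  if 0 ≤ ⌊R.coroot (R.α i) lam⌋ then
    ∑ k ∈ Finset.range (⌊R.coroot (R.α i) lam⌋.toNat + 1),
      Finsupp.single (lam - (k : ℚ) • R.α i) 1
  else if ⌊R.coroot (R.α i) lam⌋ = -1 then 0
  else - ∑ k ∈ Finset.range ((-⌊R.coroot (R.α i) lam⌋).toNat - 1),
      Finsupp.single (lam + ((k : ℚ) + 1) • R.α i) 1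

/-- The Demazure operator `D_i`, as a `ℤ`-linear endomorphism of the group
ring `ℤ[X]` (realized as finitely supported functions `V →₀ ℤ`). -/
noncomputable def demOp (i : Fin R.r) : (R.V →₀ ℤ) →ₗ[ℤ] (R.V →₀ ℤ) :=
  Finsupp.lsum ℤ fun lam => LinearMap.toSpanSingleton ℤ (R.V →₀ ℤ) (R.demOnBasis i lam)

/-- The Demazure character `D_{i_1} ⋯ D_{i_k} (e^λ)`. -/
noncomputable def demChar (l : List (Fin R.r)) (lam : R.V) : R.V →₀ ℤ :=
  l.foldr (fun i p => R.demOp i p) (Finsupp.single lam 1)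

/-- The axioms of a finite crystallographic root system spanning `V`, with
simple roots `α_i` and positive roots `pos`. -/
structure IsRootSystem (R : RootData) : Prop where
  finite : R.Φ.Finite
  span_top : Submodule.span ℚ R.Φ = ⊤
  ne_zero : ∀ β ∈ R.Φ, β ≠ 0
  coroot_self : ∀ β ∈ R.Φ, R.coroot β β = 2
  crystallographic : ∀ β ∈ R.Φ, ∀ γ ∈ R.Φ, ∃ m : ℤ, R.coroot β γ = (m : ℚ)
  reflection_stable : ∀ β ∈ R.Φ, ∀ γ ∈ R.Φ, γ - R.coroot β γ • β ∈ R.Φ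
  simple_mem : ∀ i, R.α i ∈ R.Φ
  indep : LinearIndependent ℚ R.α
  pos_subset : R.pos ⊆ R.Φ
  pos_or_neg : ∀ β ∈ R.Φ, (β ∈ R.pos ∧ -β ∉ R.pos) ∨ (β ∉ R.pos ∧ -β ∈ R.pos)
  simple_pos : ∀ i, R.α i ∈ R.pos
  pos_nonneg_comb : ∀ β ∈ R.pos, ∃ c : Fin R.r → ℚ, (∀ i, 0 ≤ c i) ∧ β = ∑ i, c i • R.α i

end RootData

set_option linter.unusedSectionVars false
set_option maxHeartbeats 1000000

namespace RootData

variable {R : RootData}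

lemma mul_apply (e f : R.Aut) (x : R.V) : (e * f) x = e (f x) := rfl

lemma inv_apply (e : R.Aut) (x : R.V) : (e⁻¹) x = e.symm x := rfl

lemma apply_inv_apply (e : R.Aut) (x : R.V) : e (e⁻¹ x) = x := e.apply_symm_apply x

lemma inv_apply_apply (e : R.Aut) (x : R.V) : e⁻¹ (e x) = x := e.symm_apply_apply x

lemma one_apply (x : R.V) : (1 : R.Aut) x = x := rfl

/-- Version of reflMap application. -/
lemma reflMap_apply (β : R.V) (x : R.V) :
    R.reflMap β x = x - R.coroot β x • β := rfl

lemma reflMap_invol {β : R.V} (h2 : R.coroot β β = 2) :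
    (R.reflMap β).comp (R.reflMap β) = LinearMap.id := by
  ext x
  simp only [LinearMap.comp_apply, reflMap_apply, LinearMap.id_apply, map_sub, map_smul,
    smul_eq_mul, h2]
  module

lemma s_apply {β : R.V} (h2 : R.coroot β β = 2) (x : R.V) :
    R.s β x = x - R.coroot β x • β := by
  rw [s, dif_pos (reflMap_invol h2)]
  rfl

lemma s_eq_of_reflMap_eq {β γ : R.V} (h : R.reflMap β = R.reflMap γ) :
    R.s β = R.s γ := by
  unfold s
  rw [h]

variable (hR : R.IsRootSystem)
include hR

lemma neg_mem_root {β : R.V} (hβ : β ∈ R.Φ) : -β ∈ R.Φ := by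
  have := hR.reflection_stable β hβ β hβ
  rwa [hR.coroot_self β hβ, show β - (2:ℚ) • β = -β by module] at this

lemma root_s_apply {β : R.V} (hβ : β ∈ R.Φ) (x : R.V) :
    R.s β x = x - R.coroot β x • β := s_apply (hR.coroot_self β hβ) x

lemma s_apply_self {β : R.V} (hβ : β ∈ R.Φ) : R.s β β = -β := by
  rw [root_s_apply hR hβ, hR.coroot_self β hβ]
  module

lemma s_mul_s {β : R.V} (hβ : β ∈ R.Φ) : R.s β * R.s β = 1 := by
  apply LinearEquiv.toLinearMap_injective
  ext x
  have h2 := hR.coroot_self β hβ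
  simp only [LinearEquiv.coe_coe, LinearMap.coe_comp, Function.comp_apply, mul_apply,
    root_s_apply hR hβ, LinearEquiv.coe_one, LinearMap.id_coe, id_eq]
  simp only [map_sub, map_smul, smul_eq_mul, h2]
  module

lemma s_inv {β : R.V} (hβ : β ∈ R.Φ) : (R.s β)⁻¹ = R.s β :=
  inv_eq_of_mul_eq_one_right (s_mul_s hR hβ)

lemma s_apply_s_apply {β : R.V} (hβ : β ∈ R.Φ) (x : R.V) :
    R.s β (R.s β x) = x := by
  have := congrArg (fun (e : R.Aut) => e x) (s_mul_s hR hβ)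
  simpa [mul_apply, one_apply] using this

lemma s_stable {β : R.V} (hβ : β ∈ R.Φ) {γ : R.V} (hγ : γ ∈ R.Φ) :
    R.s β γ ∈ R.Φ := by
  rw [root_s_apply hR hβ]
  exact hR.reflection_stable β hβ γ hγ

lemma S_apply (i : Fin R.r) (x : R.V) :
    R.S i x = x - R.coroot (R.α i) x • R.α i :=
  root_s_apply hR (hR.simple_mem i) x

lemma S_mul_S (i : Fin R.r) : R.S i * R.S i = 1 := s_mul_s hR (hR.simple_mem i)

lemma S_inv (i : Fin R.r) : (R.S i)⁻¹ = R.S i := s_inv hR (hR.simple_mem i)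

lemma S_apply_S_apply (i : Fin R.r) (x : R.V) : R.S i (R.S i x) = x :=
  s_apply_s_apply hR (hR.simple_mem i) x

omit hR in
lemma S_mem (i : Fin R.r) : R.S i ∈ R.weylGroup :=
  Subgroup.subset_closure ⟨i, rfl⟩

omit hR

lemma wordProd_nil : R.wordProd [] = 1 := rfl

lemma wordProd_cons (j : Fin R.r) (l : List (Fin R.r)) :
    R.wordProd (j :: l) = R.S j * R.wordProd l := by
  simp [wordProd, List.prod_cons]

lemma wordProd_append (l m : List (Fin R.r)) :
    R.wordProd (l ++ m) = R.wordProd l * R.wordProd m := by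
  simp [wordProd, List.prod_append]

lemma wordProd_mem (l : List (Fin R.r)) : R.wordProd l ∈ R.weylGroup := by
  induction l with
  | nil => exact one_mem _
  | cons j l ih =>
      rw [wordProd_cons]
      exact mul_mem (Subgroup.subset_closure ⟨j, rfl⟩) ih

include hR

lemma wordProd_reverse (l : List (Fin R.r)) :
    R.wordProd l.reverse = (R.wordProd l)⁻¹ := by
  induction l with
  | nil => simp [wordProd_nil]
  | cons j l ihl =>
      rw [List.reverse_cons, wordProd_append, wordProd_cons, ihl, wordProd_cons,
        mul_inv_rev, S_inv hR]
      simp [wordProd_nil]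

lemma exists_word {w : R.Aut} (hw : w ∈ R.weylGroup) :
    ∃ l : List (Fin R.r), R.wordProd l = w := by
  induction hw using Subgroup.closure_induction with
  | mem x hx =>
      obtain ⟨i, rfl⟩ := hx
      exact ⟨[i], by simp [wordProd_cons, wordProd_nil]⟩
  | one => exact ⟨[], rfl⟩
  | mul x y hx hy ihx ihy =>
      obtain ⟨l, rfl⟩ := ihx
      obtain ⟨m, rfl⟩ := ihy
      exact ⟨l ++ m, wordProd_append l m⟩
  | inv x hx ih =>
      obtain ⟨l, rfl⟩ := ih
      exact ⟨l.reverse, wordProd_reverse hR l⟩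

omit hR in
lemma len_le (l : List (Fin R.r)) : R.len (R.wordProd l) ≤ l.length :=
  Nat.sInf_le ⟨l, rfl, rfl⟩

omit hR in
lemma len_one : R.len (1 : R.Aut) = 0 :=
  Nat.le_zero.mp (Nat.sInf_le ⟨[], rfl, rfl⟩)

lemma exists_reduced {w : R.Aut} (hw : w ∈ R.weylGroup) :
    ∃ l : List (Fin R.r), R.Reduced l ∧ R.wordProd l = w ∧ l.length = R.len w := by
  have hne : {n | ∃ l : List (Fin R.r), l.length = n ∧ R.wordProd l = w}.Nonempty := by
    obtain ⟨l, hl⟩ := exists_word hR hw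
    exact ⟨l.length, l, rfl, hl⟩
  obtain ⟨l, hlen, hprod⟩ := Nat.sInf_mem hne
  refine ⟨l, ?_, hprod, hlen⟩
  rw [Reduced, hprod]
  exact hlen.symm

lemma len_eq_zero {w : R.Aut} (hw : w ∈ R.weylGroup) (h : R.len w = 0) : w = 1 := by
  obtain ⟨l, _, hprod, hlen⟩ := exists_reduced hR hw
  rw [h, List.length_eq_zero_iff] at hlen
  rw [hlen] at hprod
  exact hprod.symm

lemma len_S_mul_le {w : R.Aut} (hw : w ∈ R.weylGroup) (j : Fin R.r) :
    R.len (R.S j * w) ≤ R.len w + 1 := by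
  obtain ⟨l, _, hprod, hlen⟩ := exists_reduced hR hw
  calc R.len (R.S j * w) = R.len (R.wordProd (j :: l)) := by rw [wordProd_cons, hprod]
  _ ≤ (j :: l).length := len_le _
  _ = R.len w + 1 := by simp [hlen]

lemma len_le_len_S_mul {w : R.Aut} (hw : w ∈ R.weylGroup) (j : Fin R.r) :
    R.len w ≤ R.len (R.S j * w) + 1 := by
  have h := len_S_mul_le hR (mul_mem (S_mem j) hw) j
  rwa [← mul_assoc, S_mul_S hR, one_mul] at h

/-- Uniqueness of the coroot functional attached to a root. -/
lemma coroot_unique {β : R.V} (hβ : β ∈ R.Φ) (f g : Module.Dual ℚ R.V)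
    (hf2 : f β = 2) (hg2 : g β = 2)
    (hfΦ : ∀ γ ∈ R.Φ, γ - f γ • β ∈ R.Φ) (hgΦ : ∀ γ ∈ R.Φ, γ - g γ • β ∈ R.Φ) :
    f = g := by
  have hβ0 : β ≠ 0 := hR.ne_zero β hβ
  have hT : ∀ γ ∈ R.Φ, γ + (g γ - f γ) • β ∈ R.Φ := by
    intro γ hγ
    have h2 := hfΦ _ (hgΦ γ hγ)
    have : (γ - g γ • β) - f (γ - g γ • β) • β = γ + (g γ - f γ) • β := by
      simp only [map_sub, map_smul, smul_eq_mul, hf2]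
      module
    rwa [this] at h2
  have key : ∀ γ ∈ R.Φ, f γ = g γ := by
    intro γ hγ
    by_contra hc
    have hb : (g γ - f γ) • β ≠ 0 :=
      smul_ne_zero (sub_ne_zero.mpr (fun h => hc h.symm)) hβ0
    have hmem : ∀ n : ℕ, γ + (n : ℚ) • ((g γ - f γ) • β) ∈ R.Φ := by
      intro n
      induction n with
      | zero => simpa using hγ
      | succ n ih =>
          have h3 := hT _ ih
          have heq : γ + (n:ℚ) • ((g γ - f γ) • β) + (g (γ + (n:ℚ) • ((g γ - f γ) • β))
              - f (γ + (n:ℚ) • ((g γ - f γ) • β))) • β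
              = γ + (((n:ℚ)+1)) • ((g γ - f γ) • β) := by
            simp only [map_add, map_smul, smul_eq_mul, hf2, hg2]
            module
          rw [heq] at h3
          simpa [Nat.cast_succ] using h3
    have hinj : Function.Injective (fun n : ℕ => γ + (n : ℚ) • ((g γ - f γ) • β)) := by
      intro m n hmn
      have h4 : (m:ℚ) • ((g γ - f γ) • β) = (n:ℚ) • ((g γ - f γ) • β) :=
        add_left_cancel hmn
      have h5 := smul_left_injective ℚ hb h4
      exact_mod_cast h5
    exact (Set.infinite_of_injective_forall_mem hinj hmem) hR.finite
  exact LinearMap.ext_on hR.span_top key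

/-- Positive/negative dichotomy for roots. -/
lemma root_dichotomy {β : R.V} (hβ : β ∈ R.Φ) : β ∈ R.pos ∨ -β ∈ R.pos := by
  rcases hR.pos_or_neg β hβ with h | h
  · exact Or.inl h.1
  · exact Or.inr h.2

lemma not_pos_neg {β : R.V} (hβ : β ∈ R.Φ) (h : β ∈ R.pos) : -β ∉ R.pos := by
  rcases hR.pos_or_neg β hβ with h' | h'
  · exact h'.2
  · exact absurd h h'.1

lemma neg_of_not_pos {β : R.V} (hβ : β ∈ R.Φ) (h : β ∉ R.pos) : -β ∈ R.pos := by
  rcases root_dichotomy hR hβ with h' | h'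
  · exact absurd h' h
  · exact h'

/-- Equivariance of the coroot under the Weyl group. -/
lemma weyl_equivariance {g : R.Aut} (hg : g ∈ R.weylGroup) :
    (∀ β ∈ R.Φ, g β ∈ R.Φ) ∧
    (∀ β ∈ R.Φ, ∀ x, R.coroot (g β) x = R.coroot β (g⁻¹ x)) := by
  -- symmetric predicate handles inverses
  let A : R.Aut → Prop := fun g => (∀ β ∈ R.Φ, g β ∈ R.Φ) ∧
    (∀ β ∈ R.Φ, ∀ x, R.coroot (g β) x = R.coroot β (g⁻¹ x))
  have base : ∀ i : Fin R.r, A (R.S i) := by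
    intro i
    constructor
    · intro β hβ; exact s_stable hR (hR.simple_mem i) hβ
    · intro β hβ x
      have hSβ : R.S i β ∈ R.Φ := s_stable hR (hR.simple_mem i) hβ
      have huniq : R.coroot (R.S i β) =
          (R.coroot β).comp ((R.S i : R.Aut) : R.V →ₗ[ℚ] R.V) := by
        apply coroot_unique hR hSβ
        · exact hR.coroot_self _ hSβ
        · show R.coroot β (R.S i (R.S i β)) = 2
          rw [S_apply_S_apply hR]
          exact hR.coroot_self β hβ
        · intro γ hγ
          exact hR.reflection_stable _ hSβ γ hγ
        · intro γ hγ
          show γ - R.coroot β (R.S i γ) • R.S i β ∈ R.Φ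
          have : γ - R.coroot β (R.S i γ) • R.S i β
              = R.S i (R.S i γ - R.coroot β (R.S i γ) • β) := by
            rw [map_sub, map_smul, S_apply_S_apply hR]
          rw [this]
          exact s_stable hR (hR.simple_mem i)
            (hR.reflection_stable β hβ _ (s_stable hR (hR.simple_mem i) hγ))
      rw [huniq]
      show R.coroot β (R.S i x) = R.coroot β ((R.S i)⁻¹ x)
      rw [S_inv hR]
  have hA : A g := by
    induction hg using Subgroup.closure_induction with
    | mem x hx =>
        obtain ⟨i, rfl⟩ := hx
        exact base i
    | one =>
        constructor
        · intro β hβ; simpa [one_apply] using hβ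
        · intro β hβ x; simp [one_apply, inv_one]
    | mul x y hx hy ihx ihy =>
        constructor
        · intro β hβ
          rw [mul_apply]
          exact ihx.1 _ (ihy.1 β hβ)
        · intro β hβ x'
          rw [mul_apply, ihx.2 _ (ihy.1 β hβ), ihy.2 β hβ, mul_inv_rev, mul_apply]
    | inv x hx ih =>
        have hsurj : ∀ β ∈ R.Φ, x⁻¹ β ∈ R.Φ := by
          have hmap : Set.MapsTo (x : R.V → R.V) R.Φ R.Φ := fun β hβ => ih.1 β hβ
          have hbij := (hR.finite.injOn_iff_bijOn_of_mapsTo hmap).mp (x.injective.injOn)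
          intro β hβ
          obtain ⟨γ, hγ, hxγ⟩ := hbij.surjOn hβ
          have : x⁻¹ β = γ := by rw [← hxγ, inv_apply_apply]
          rw [this]; exact hγ
        constructor
        · exact hsurj
        · intro β hβ x'
          have h1 := ih.2 (x⁻¹ β) (hsurj β hβ) (x x')
          rw [apply_inv_apply, inv_apply_apply] at h1
          rw [← h1, inv_inv]
  exact hA

lemma weyl_stable {g : R.Aut} (hg : g ∈ R.weylGroup) {β : R.V} (hβ : β ∈ R.Φ) :
    g β ∈ R.Φ := (weyl_equivariance hR hg).1 β hβ

lemma coroot_equiv {g : R.Aut} (hg : g ∈ R.weylGroup) {β : R.V} (hβ : β ∈ R.Φ) (x : R.V) :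
    R.coroot (g β) x = R.coroot β (g⁻¹ x) := (weyl_equivariance hR hg).2 β hβ x

/-- Conjugation formula: `s (g β) = g * s β * g⁻¹`. -/
lemma s_conj {g : R.Aut} (hg : g ∈ R.weylGroup) {β : R.V} (hβ : β ∈ R.Φ) :
    R.s (g β) = g * R.s β * g⁻¹ := by
  apply LinearEquiv.toLinearMap_injective
  ext x
  simp only [LinearEquiv.coe_coe, LinearMap.coe_comp, Function.comp_apply, mul_apply]
  rw [root_s_apply hR (weyl_stable hR hg hβ), root_s_apply hR hβ,
    coroot_equiv hR hg hβ, map_sub, map_smul, apply_inv_apply]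

/-- A positive root which is not a multiple of `α_j` stays positive under `S j`. -/
lemma S_pos_of_not_ray {j : Fin R.r} {γ : R.V} (hγ : γ ∈ R.pos)
    (hne : ∀ q : ℚ, γ ≠ q • R.α j) : R.S j γ ∈ R.pos := by
  obtain ⟨c, hc0, hcsum⟩ := hR.pos_nonneg_comb γ hγ
  have hγΦ : γ ∈ R.Φ := hR.pos_subset hγ
  have hSγΦ : R.S j γ ∈ R.Φ := s_stable hR (hR.simple_mem j) hγΦ
  rcases root_dichotomy hR hSγΦ with h | h
  · exact h
  · exfalso
    obtain ⟨e, he0, hesum⟩ := hR.pos_nonneg_comb _ h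
    -- 0 = S j γ + (- S j γ) = ∑ (c k + e k - ite (k=j) C 0) • α k
    set C := R.coroot (R.α j) γ with hC
    have hzero : ∑ k, (c k + e k - (if k = j then C else 0)) • R.α k = 0 := by
      have h1 : R.S j γ = γ - C • R.α j := S_apply hR j γ
      have expand : ∑ k, (c k + e k - (if k = j then C else 0)) • R.α k
          = (∑ k, c k • R.α k) + ((∑ k, e k • R.α k) - C • R.α j) := by
        simp only [sub_smul, add_smul, Finset.sum_sub_distrib, Finset.sum_add_distrib,
          ite_smul, zero_smul, Finset.sum_ite_eq', Finset.mem_univ, if_true]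
        abel
      rw [expand, ← hcsum, ← hesum, h1]
      abel
    have hall := Fintype.linearIndependent_iff.mp hR.indep _ hzero
    -- all coefficients zero; in particular for k ≠ j, c k = 0
    have hcj : ∀ k, k ≠ j → c k = 0 := by
      intro k hk
      have := hall k
      rw [if_neg hk] at this
      have hck := hc0 k
      have hek := he0 k
      linarith
    apply hne (c j)
    rw [hcsum]
    rw [Finset.sum_eq_single j]
    · intro k _ hk
      rw [hcj k hk, zero_smul]
    · intro hj
      exact absurd (Finset.mem_univ j) hj

/-- If `γ = q • α_j` is a root with `q ≠ 0`, then `s γ = S j`. -/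
lemma s_ray_eq_S {j : Fin R.r} {γ : R.V} (hγ : γ ∈ R.Φ) {q : ℚ} (hq : q ≠ 0)
    (heq : γ = q • R.α j) : R.s γ = R.S j := by
  have hcor : R.coroot γ = q⁻¹ • R.coroot (R.α j) := by
    apply coroot_unique hR hγ
    · exact hR.coroot_self γ hγ
    · show q⁻¹ * R.coroot (R.α j) γ = 2
      rw [heq, map_smul, smul_eq_mul, hR.coroot_self _ (hR.simple_mem j)]
      field_simp
    · intro δ hδ
      exact hR.reflection_stable γ hγ δ hδ
    · intro δ hδ
      have : δ - (q⁻¹ • R.coroot (R.α j)) δ • γ = δ - R.coroot (R.α j) δ • R.α j := by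
        rw [heq]
        simp only [LinearMap.smul_apply, smul_eq_mul, smul_smul]
        rw [inv_mul_eq_div, div_mul_cancel₀ _ hq]  -- (q⁻¹ * cδ) * q = cδ
      rw [this]
      exact hR.reflection_stable _ (hR.simple_mem j) δ hδ
  apply s_eq_of_reflMap_eq
  unfold reflMap
  rw [hcor, heq]
  ext x
  simp only [LinearMap.sub_apply, LinearMap.id_apply, LinearMap.coe_smulRight,
    LinearMap.smul_apply, smul_eq_mul, smul_smul]
  rw [inv_mul_eq_div, div_mul_cancel₀ _ hq]

/-- If a positive root is sent to a non-positive root by `S j`, it is a positive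
multiple of `α_j` and its reflection is `S j`. -/
lemma ray_of_S_not_pos {j : Fin R.r} {γ : R.V} (hγ : γ ∈ R.pos)
    (h : R.S j γ ∉ R.pos) : R.s γ = R.S j := by
  by_cases hray : ∀ q : ℚ, γ ≠ q • R.α j
  · exact absurd (S_pos_of_not_ray hR hγ hray) h
  · push_neg at hray
    obtain ⟨q, hq⟩ := hray
    have hq0 : q ≠ 0 := by
      intro h0
      rw [h0, zero_smul] at hq
      exact hR.ne_zero γ (hR.pos_subset hγ) hq
    exact s_ray_eq_S hR (hR.pos_subset hγ) hq0 hq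

/-- Left strong exchange. -/
lemma strong_exchange : ∀ (l : List (Fin R.r)) {γ : R.V}, γ ∈ R.pos →
    (R.wordProd l)⁻¹ γ ∉ R.pos →
    ∃ t < l.length, R.s γ * R.wordProd l = R.wordProd (l.eraseIdx t) := by
  intro l
  induction l with
  | nil =>
      intro γ hγ hneg
      exfalso
      apply hneg
      simpa [wordProd_nil, inv_one, one_apply] using hγ
  | cons j m ih =>
      intro γ hγ hneg
      have hγΦ : γ ∈ R.Φ := hR.pos_subset hγ
      have hkey : (R.wordProd (j :: m))⁻¹ γ = (R.wordProd m)⁻¹ (R.S j γ) := by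
        rw [wordProd_cons, mul_inv_rev, S_inv hR, mul_apply]
      by_cases hSpos : R.S j γ ∈ R.pos
      · have hneg' : (R.wordProd m)⁻¹ (R.S j γ) ∉ R.pos := by rwa [hkey] at hneg
        obtain ⟨t, ht, heq⟩ := ih hSpos hneg'
        refine ⟨t + 1, by simpa using Nat.succ_lt_succ ht, ?_⟩
        rw [List.eraseIdx_cons_succ, wordProd_cons, wordProd_cons, ← heq]
        have hconj : R.s (R.S j γ) = R.S j * R.s γ * (R.S j)⁻¹ :=
          s_conj hR (S_mem j) hγΦ
        rw [hconj, S_inv hR]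
        simp only [← mul_assoc]
        rw [S_mul_S hR, one_mul]
      · have hray : R.s γ = R.S j := ray_of_S_not_pos hR hγ hSpos
        refine ⟨0, by simp, ?_⟩
        rw [List.eraseIdx_cons_zero, hray, wordProd_cons, ← mul_assoc, S_mul_S hR, one_mul]

lemma len_s_mul_lt {w : R.Aut} (hw : w ∈ R.weylGroup) {γ : R.V} (hγ : γ ∈ R.pos)
    (hneg : w⁻¹ γ ∉ R.pos) :
    R.len (R.s γ * w) < R.len w ∧ R.s γ * w ∈ R.weylGroup := by
  obtain ⟨l, hred, hprod, hlen⟩ := exists_reduced hR hw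
  have hneg' : (R.wordProd l)⁻¹ γ ∉ R.pos := by rwa [hprod]
  obtain ⟨t, ht, heq⟩ := strong_exchange hR l hγ hneg'
  rw [hprod] at heq
  have hlw : 0 < R.len w := by
    rcases Nat.eq_zero_or_pos (R.len w) with h0 | h
    · exfalso
      apply hneg
      rw [len_eq_zero hR hw h0]
      simpa [inv_one, one_apply] using hγ
    · exact h
  constructor
  · calc R.len (R.s γ * w) ≤ (l.eraseIdx t).length := heq ▸ len_le _
    _ = l.length - 1 := by rw [List.length_eraseIdx_of_lt ht]
    _ < R.len w := by omega
  · rw [heq]; exact wordProd_mem _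

lemma len_S_mul_lt {v : R.Aut} (hv : v ∈ R.weylGroup) {j : Fin R.r}
    (hneg : v⁻¹ (R.α j) ∉ R.pos) : R.len (R.S j * v) < R.len v :=
  (len_s_mul_lt hR hv (hR.simple_pos j) hneg).1

lemma len_S_mul_gt {v : R.Aut} (hv : v ∈ R.weylGroup) {j : Fin R.r}
    (hpos : v⁻¹ (R.α j) ∈ R.pos) : R.len v < R.len (R.S j * v) := by
  have hvΦ : v⁻¹ (R.α j) ∈ R.Φ := weyl_stable hR (inv_mem hv) (hR.simple_mem j)
  have hneg : (R.S j * v)⁻¹ (R.α j) ∉ R.pos := by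
    have : (R.S j * v)⁻¹ (R.α j) = -(v⁻¹ (R.α j)) := by
      rw [mul_inv_rev, S_inv hR, mul_apply]
      have hSj : R.S j (R.α j) = -(R.α j) := s_apply_self hR (hR.simple_mem j)
      rw [hSj, map_neg]
    rw [this]
    exact not_pos_neg hR hvΦ hpos
  have h := len_S_mul_lt hR (mul_mem (S_mem j) hv) hneg
  rwa [← mul_assoc, S_mul_S hR, one_mul] at h

lemma len_S_mul_cases {v : R.Aut} (hv : v ∈ R.weylGroup) (j : Fin R.r) :
    R.len (R.S j * v) = R.len v + 1 ∨ R.len v = R.len (R.S j * v) + 1 := by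
  have hvΦ : v⁻¹ (R.α j) ∈ R.Φ := weyl_stable hR (inv_mem hv) (hR.simple_mem j)
  by_cases hpos : v⁻¹ (R.α j) ∈ R.pos
  · left
    have h1 := len_S_mul_gt hR hv hpos
    have h2 := len_S_mul_le hR hv j
    omega
  · right
    have h1 := len_S_mul_lt hR hv hpos
    have h2 := len_le_len_S_mul hR hv j
    omega

lemma pos_iff_len_lt {v : R.Aut} (hv : v ∈ R.weylGroup) (j : Fin R.r) :
    v⁻¹ (R.α j) ∈ R.pos ↔ R.len v < R.len (R.S j * v) := by
  constructor
  · exact len_S_mul_gt hR hv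
  · intro h
    by_contra hneg
    have := len_S_mul_lt hR hv hneg
    omega

/-- Any word has a reduced sublist with the same product. -/
lemma exists_reduced_sublist : ∀ (n : ℕ) (l : List (Fin R.r)), l.length ≤ n →
    ∃ l', l'.Sublist l ∧ R.wordProd l' = R.wordProd l ∧ R.Reduced l' := by
  have shorten : ∀ l : List (Fin R.r), ¬ R.Reduced l →
      ∃ l₁, l₁.Sublist l ∧ l₁.length < l.length ∧ R.wordProd l₁ = R.wordProd l := by
    intro l
    induction l with
    | nil =>
        intro hnr
        exact absurd (by rw [Reduced, wordProd_nil, len_one]; rfl) hnr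
    | cons j m ih =>
        intro hnr
        rcases len_S_mul_cases hR (wordProd_mem m) j with hup | hdown
        · have hm : ¬ R.Reduced m := by
            intro hm
            apply hnr
            rw [Reduced, wordProd_cons, hup, hm]
            simp
          obtain ⟨m₁, hsub, hlen, hprod⟩ := ih hm
          exact ⟨j :: m₁, hsub.cons₂ j, by simpa using Nat.succ_lt_succ hlen,
            by rw [wordProd_cons, wordProd_cons, hprod]⟩
        · have hneg : (R.wordProd m)⁻¹ (R.α j) ∉ R.pos := by
            intro hpos
            have := len_S_mul_gt hR (wordProd_mem m) hpos
            omega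
          obtain ⟨t, ht, heq⟩ := strong_exchange hR m (hR.simple_pos j) hneg
          refine ⟨m.eraseIdx t, (List.eraseIdx_sublist m t).cons j, ?_, ?_⟩
          · have := List.length_eraseIdx_of_lt ht
            simp only [List.length_cons]
            omega
          · rw [← heq, wordProd_cons]
            rfl
  intro n
  induction n with
  | zero =>
      intro l hl
      have : l = [] := List.length_eq_zero_iff.mp (Nat.le_zero.mp hl)
      subst this
      exact ⟨[], List.Sublist.refl _, rfl, by rw [Reduced, wordProd_nil, len_one]; rfl⟩
  | succ n ihn =>
      intro l hl
      by_cases hred : R.Reduced l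
      · exact ⟨l, List.Sublist.refl _, rfl, hred⟩
      · obtain ⟨l₁, hsub, hlen, hprod⟩ := shorten l hred
        obtain ⟨l', hsub', hprod', hred'⟩ := ihn l₁ (by omega)
        exact ⟨l', hsub'.trans hsub, by rw [hprod', hprod], hred'⟩

lemma sub_exchange {r a : List (Fin R.r)} (hsub : a.Sublist r) {j : Fin R.r}
    (hneg : (R.wordProd a)⁻¹ (R.α j) ∉ R.pos) :
    ∃ a', a'.Sublist r ∧ R.wordProd a' = R.S j * R.wordProd a := by
  obtain ⟨t, _, heq⟩ := strong_exchange hR a (hR.simple_pos j) hneg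
  exact ⟨a.eraseIdx t, (List.eraseIdx_sublist a t).trans hsub, heq.symm⟩

end RootData

/-- The chain ("Bruhat graph") order: `u ≤ w` via left multiplications by
reflections which increase length. -/
inductive RootData.ChainLE (R : RootData) : R.Aut → R.Aut → Prop
  | refl (u : R.Aut) (hu : u ∈ R.weylGroup) : RootData.ChainLE R u u
  | step {u x : R.Aut} {γ : R.V} (h : RootData.ChainLE R u x) (hγ : γ ∈ R.pos)
      (hx : x ∈ R.weylGroup) (hsx : R.s γ * x ∈ R.weylGroup)
      (hlt : R.len x < R.len (R.s γ * x)) : RootData.ChainLE R u (R.s γ * x)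

namespace RootData

variable {R : RootData} (hR : R.IsRootSystem)
include hR

lemma ChainLE.mem_right {u w : R.Aut} (h : R.ChainLE u w) : w ∈ R.weylGroup := by
  cases h with
  | refl hu => exact hu
  | step h hγ hx hsx hlt => assumption

omit hR in
lemma ChainLE.mem_left {u w : R.Aut} (h : R.ChainLE u w) : u ∈ R.weylGroup := by
  induction h with
  | refl hu => exact hu
  | step h hγ hx hsx hlt ih => exact ih

omit hR in
lemma ChainLE.len_le {u w : R.Aut} (h : R.ChainLE u w) : R.len u ≤ R.len w := by
  induction h with
  | refl hu => exact le_rfl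
  | step h hγ hx hsx hlt ih => omega

omit hR in
lemma ChainLE.trans {u v w : R.Aut} (h1 : R.ChainLE u v) (h2 : R.ChainLE v w) :
    R.ChainLE u w := by
  induction h2 with
  | refl hu => exact h1
  | step h hγ hx hsx hlt ih => exact ih.step hγ hx hsx hlt

/-- A length-increasing simple-reflection step. -/
lemma ChainLE.stepS {u x : R.Aut} (h : R.ChainLE u x) (j : Fin R.r)
    (hx : x ∈ R.weylGroup) (hlt : R.len x < R.len (R.S j * x)) :
    R.ChainLE u (R.S j * x) :=
  h.step (hR.simple_pos j) hx (mul_mem (S_mem j) hx) hlt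

/-- Direction A: chain order implies subword of every reduced word. -/
lemma chain_sub {u w : R.Aut} (h : R.ChainLE u w) :
    ∀ n : List (Fin R.r), R.Reduced n → R.wordProd n = w →
    ∃ n', n'.Sublist n ∧ R.wordProd n' = u := by
  induction h with
  | refl hu =>
      intro n hred hprod
      exact ⟨n, List.Sublist.refl _, hprod⟩
  | step h hγ hx hsx hlt ih =>
      intro n hred hprod
      rename_i x γ
      have hw : R.s γ * x ∈ R.weylGroup := hsx
      have hγΦ : γ ∈ R.Φ := hR.pos_subset hγ
      have hxw : x = R.s γ * (R.s γ * x) := by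
        rw [← mul_assoc, s_mul_s hR hγΦ, one_mul]
      have hneg : (R.s γ * x)⁻¹ γ ∉ R.pos := by
        intro hp
        -- then x = s γ * (s γ x) has smaller length than s γ x, contradiction
        have hxinv : x⁻¹ γ ∉ R.pos := by
          have hexp : x⁻¹ γ = -((R.s γ * x)⁻¹ γ) := by
            have h1 : (R.s γ * x)⁻¹ γ = x⁻¹ (R.s γ γ) := by
              rw [mul_inv_rev, s_inv hR hγΦ, mul_apply]
            rw [h1, s_apply_self hR hγΦ, map_neg, neg_neg]
          rw [hexp]
          exact not_pos_neg hR (weyl_stable hR (inv_mem hw) hγΦ) hp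
        have := (len_s_mul_lt hR hx hγ hxinv).1
        omega
      have hn : R.wordProd n = R.s γ * x := hprod
      obtain ⟨t, ht, heq⟩ := strong_exchange hR n hγ (by rw [hn]; exact hneg)
      rw [hn, ← hxw] at heq
      -- heq : x = wordProd (n.eraseIdx t)
      obtain ⟨n₂, hsub₂, hprod₂, hred₂⟩ :=
        exists_reduced_sublist hR (n.eraseIdx t).length (n.eraseIdx t) le_rfl
      obtain ⟨n', hsub', hprod'⟩ := ih n₂ hred₂ (by rw [hprod₂, ← heq])
      exact ⟨n', hsub'.trans (hsub₂.trans (List.eraseIdx_sublist n t)), hprod'⟩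

lemma reduced_cons {j : Fin R.r} {m : List (Fin R.r)} (h : R.Reduced (j :: m)) :
    R.Reduced m ∧ R.len (R.wordProd m) < R.len (R.S j * R.wordProd m) := by
  have h1 : R.len (R.S j * R.wordProd m) = m.length + 1 := by
    have := h
    rwa [Reduced, wordProd_cons, List.length_cons] at this
  have h2 : R.len (R.wordProd m) ≤ m.length := len_le _
  have h3 : R.len (R.S j * R.wordProd m) ≤ R.len (R.wordProd m) + 1 :=
    len_S_mul_le hR (wordProd_mem m) j
  constructor
  · rw [Reduced]; omega
  · omega

/-- The master induction: subword implies chain order, and the chain order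
satisfies the lifting property. -/
lemma master : ∀ k : ℕ,
    (∀ n : List (Fin R.r), R.Reduced n → n.length ≤ k →
      ∀ n', n'.Sublist n → R.ChainLE (R.wordProd n') (R.wordProd n)) ∧
    (∀ u w' : R.Aut, R.ChainLE u w' → R.len w' ≤ k → ∀ j : Fin R.r,
      R.len w' < R.len (R.S j * w') → R.len u < R.len (R.S j * u) →
      R.ChainLE (R.S j * u) (R.S j * w')) := by
  intro k
  induction k with
  | zero =>
      constructor
      · intro n hred hn n' hsub
        have : n = [] := List.length_eq_zero_iff.mp (Nat.le_zero.mp hn)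
        subst this
        have : n' = [] := List.sublist_nil.mp hsub
        subst this
        exact ChainLE.refl _ (one_mem _)
      · intro u w' hch hw' j hjw hju
        have hw1 : w' = 1 := len_eq_zero hR (hch.mem_right hR) (Nat.le_zero.mp hw')
        have hu1 : u = 1 := by
          have := hch.len_le
          exact len_eq_zero hR hch.mem_left (by omega)
        subst hw1; subst hu1
        exact ChainLE.refl _ (mul_mem (S_mem j) (one_mem _))
  | succ k IH =>
      constructor
      · -- DirB (k+1)
        intro n hred hn n' hsub
        match n, hsub with
        | [], hsub =>
            have : n' = [] := List.sublist_nil.mp hsub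
            subst this
            exact ChainLE.refl _ (one_mem _)
        | j :: m, hsub =>
            obtain ⟨hredm, hlt⟩ := reduced_cons hR hred
            have hmlen : m.length ≤ k := by
              have := hn; simp only [List.length_cons] at this; omega
            rcases List.sublist_cons_iff.mp hsub with hsub' | ⟨a, rfl, hsub'⟩
            · have hchain := (IH.1) m hredm hmlen n' hsub'
              rw [wordProd_cons]
              exact hchain.stepS hR j (wordProd_mem m) hlt
            · have hchain := (IH.1) m hredm hmlen a hsub'
              rw [wordProd_cons, wordProd_cons]
              rcases len_S_mul_cases hR (wordProd_mem a) j with hup | hdown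
              · -- len (S j (R.wordProd a)) = len (R.wordProd a) + 1 : use CORE at k
                have hw'len : R.len (R.wordProd m) ≤ k := by
                  have := len_le (R := R) m; omega
                exact (IH.2) (R.wordProd a) (R.wordProd m) hchain hw'len j hlt (by omega)
              · -- len (R.wordProd a) = len (S j (R.wordProd a)) + 1 : step down then transitivity
                have hstep : R.ChainLE (R.S j * (R.wordProd a)) (R.wordProd a) := by
                  have h0 : R.ChainLE (R.S j * (R.wordProd a)) (R.S j * (R.S j * (R.wordProd a))) :=
                    (ChainLE.refl _ (mul_mem (S_mem j) (wordProd_mem a))).stepS hR j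
                      (mul_mem (S_mem j) (wordProd_mem a))
                      (by rw [← mul_assoc, S_mul_S hR, one_mul]; omega)
                  rwa [← mul_assoc, S_mul_S hR, one_mul] at h0
                exact ((hstep.trans hchain).stepS hR j (wordProd_mem m) hlt)
      · -- CORE (k+1)
        intro u w' hch hw' j hjw hju
        cases hch with
        | refl hu =>
            exact ChainLE.refl _ (mul_mem (S_mem j) hu)
        | step h hγ hx hsx hlt =>
            rename_i x γ
            -- w' = s γ * x
            rcases len_S_mul_cases hR (by assumption : x ∈ R.weylGroup) j with hxup | hxdown
            · -- up: use CORE at k on (u, x)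
              have hxlen : R.len x ≤ k := by omega
              have hcore := (IH.2) u x h hxlen j (by omega) hju
              -- step from S j x to S j (s γ x) via reflection s (S j γ)
              have hγΦ : γ ∈ R.Φ := hR.pos_subset hγ
              have hSγΦ : R.S j γ ∈ R.Φ := s_stable hR (hR.simple_mem j) hγΦ
              have hconj : R.s (R.S j γ) = R.S j * R.s γ * R.S j := by
                rw [s_conj hR (S_mem j) hγΦ, S_inv hR]
              have heq : R.s (R.S j γ) * (R.S j * x) = R.S j * (R.s γ * x) := by
                rw [hconj]
                simp only [← mul_assoc]
                rw [mul_assoc (R.S j * R.s γ), S_mul_S hR, mul_one]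
              have hmem1 : R.S j * x ∈ R.weylGroup := mul_mem (S_mem j) (by assumption)
              have hmem2 : R.s (R.S j γ) * (R.S j * x) ∈ R.weylGroup := by
                rw [heq]; exact mul_mem (S_mem j) hsx
              have hlen2 : R.len (R.S j * x) < R.len (R.s (R.S j γ) * (R.S j * x)) := by
                rw [heq]
                have hA : R.len (R.S j * (R.s γ * x)) = R.len (R.s γ * x) + 1 := by
                  rcases len_S_mul_cases hR hsx j with hc | hc
                  · omega
                  · omega
                omega
              -- dichotomy for the root S j γ
              rcases root_dichotomy hR hSγΦ with hp | hp
              · have := hcore.step hp hmem1 hmem2 hlen2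
                rwa [heq] at this
              · have hsneg : R.s (-(R.S j γ)) = R.s (R.S j γ) := by
                  apply s_eq_of_reflMap_eq
                  have hcor : R.coroot (-(R.S j γ)) = -R.coroot (R.S j γ) := by
                    apply coroot_unique hR (neg_mem_root hR hSγΦ)
                    · exact hR.coroot_self _ (neg_mem_root hR hSγΦ)
                    · show -(R.coroot (R.S j γ) (-(R.S j γ))) = 2
                      rw [map_neg, hR.coroot_self _ hSγΦ]; ring
                    · intro δ hδ
                      exact hR.reflection_stable _ (neg_mem_root hR hSγΦ) δ hδ
                    · intro δ hδ
                      have : δ - (-R.coroot (R.S j γ)) δ • -R.S j γ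
                          = δ - R.coroot (R.S j γ) δ • R.S j γ := by
                        simp only [LinearMap.neg_apply]
                        module
                      rw [this]
                      exact hR.reflection_stable _ hSγΦ δ hδ
                  unfold reflMap
                  rw [hcor]
                  ext x'
                  simp only [LinearMap.sub_apply, LinearMap.id_apply,
                    LinearMap.coe_smulRight, LinearMap.neg_apply]
                  module
                have hmem2' : R.s (-(R.S j γ)) * (R.S j * x) ∈ R.weylGroup := by
                  rw [hsneg]; exact hmem2
                have hlen2' : R.len (R.S j * x) < R.len (R.s (-(R.S j γ)) * (R.S j * x)) := by
                  rw [hsneg]; exact hlen2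
                have := hcore.step hp hmem1 hmem2' hlen2'
                rwa [hsneg, heq] at this
            · -- down: inline property Z
              have hxW : x ∈ R.weylGroup := by assumption
              have hy'W : R.S j * x ∈ R.weylGroup := mul_mem (S_mem j) hxW
              obtain ⟨r, hrred, hrprod, hrlen⟩ := exists_reduced hR hy'W
              have hjr_prod : R.wordProd (j :: r) = x := by
                rw [wordProd_cons, hrprod, ← mul_assoc, S_mul_S hR, one_mul]
              have hjr_red : R.Reduced (j :: r) := by
                rw [Reduced, hjr_prod, List.length_cons, hrlen]
                omega
              obtain ⟨l', hlsub, hlprod⟩ := chain_sub hR h (j :: r) hjr_red hjr_prod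
              have hrlen_le : r.length ≤ k := by
                rw [hrlen]
                omega
              have hxlen_le : (j :: r).length ≤ k := by
                simp only [List.length_cons, hrlen]
                omega
              rcases List.sublist_cons_iff.mp hlsub with hsub' | ⟨a, rfl, hsub'⟩
              · -- u is a subword of r : then S j u is a subword of j :: r, a reduced word for x
                have hchain : R.ChainLE (R.S j * u) x := by
                  have := (IH.1) (j :: r) hjr_red hxlen_le (j :: l')
                    (hsub'.cons₂ j)
                  rwa [wordProd_cons, hlprod, hjr_prod] at this
                exact (hchain.step hγ hxW hsx hlt).stepS hR j hsx hjw
              · -- u = S j * (wordProd a) with a subword of r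
                have hu2 : R.S j * u = R.wordProd a := by
                  rw [← hlprod, wordProd_cons, ← mul_assoc, S_mul_S hR, one_mul]
                have hchain : R.ChainLE (R.wordProd a) (R.S j * x) := by
                  have := (IH.1) r hrred hrlen_le a hsub'
                  rwa [hrprod] at this
                have hchain2 : R.ChainLE (R.wordProd a) x := by
                  have hstep := hchain.stepS hR j hy'W
                    (by rw [← mul_assoc, S_mul_S hR, one_mul]; omega)
                  rwa [← mul_assoc, S_mul_S hR, one_mul] at hstep
                rw [hu2]
                exact (hchain2.step hγ hxW hsx hlt).stepS hR j hsx hjw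

/-- Any Bruhat-below element appears as a subword of any chosen reduced word. -/
lemma bruhat_chain {u w : R.Aut} (hu : R.BruhatLE u w) : R.ChainLE u w := by
  obtain ⟨n, hnred, hnprod, n', hn'sub, hn'prod⟩ := hu
  have := (master hR n.length).1 n hnred le_rfl n' hn'sub
  rwa [hnprod, hn'prod] at this

omit hR in
lemma BruhatLE.mem {u w : R.Aut} (hu : R.BruhatLE u w) : u ∈ R.weylGroup := by
  obtain ⟨n, _, _, n', _, hn'prod⟩ := hu
  rw [← hn'prod]
  exact wordProd_mem n'

/-- The lifting property used for the Demazure polytope. -/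
lemma bruhat_lift {u w : R.Aut} (hw : w ∈ R.weylGroup) {i : Fin R.r}
    (hlt : R.len (R.S i * w) + 1 = R.len w) (hu : R.BruhatLE u w) :
    ∃ v : R.Aut, v ∈ R.weylGroup ∧ R.BruhatLE v (R.S i * w) ∧
      (u = v ∨ u = R.S i * v) ∧ R.len v < R.len (R.S i * v) := by
  have huW : u ∈ R.weylGroup := hu.mem
  have hchain : R.ChainLE u w := bruhat_chain hR hu
  have hSwW : R.S i * w ∈ R.weylGroup := mul_mem (S_mem i) hw
  obtain ⟨r, hrred, hrprod, hrlen⟩ := exists_reduced hR hSwW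
  have hir_prod : R.wordProd (i :: r) = w := by
    rw [wordProd_cons, hrprod, ← mul_assoc, S_mul_S hR, one_mul]
  have hir_red : R.Reduced (i :: r) := by
    rw [Reduced, hir_prod, List.length_cons, hrlen]
    omega
  obtain ⟨l', hlsub, hlprod⟩ := chain_sub hR hchain (i :: r) hir_red hir_prod
  rcases len_S_mul_cases hR huW i with hup | hdown
  · -- len (S i u) = len u + 1 ; take v = u
    refine ⟨u, huW, ?_, Or.inl rfl, by omega⟩
    rcases List.sublist_cons_iff.mp hlsub with hsub' | ⟨a, rfl, hsub'⟩
    · exact ⟨r, hrred, hrprod, l', hsub', hlprod⟩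
    · -- u = S i * wordProd a
      have hu2 : R.S i * u = R.wordProd a := by
        rw [← hlprod, wordProd_cons, ← mul_assoc, S_mul_S hR, one_mul]
      have haW : R.wordProd a ∈ R.weylGroup := wordProd_mem a
      have hlen_a : R.len (R.wordProd a) = R.len u + 1 := by rw [← hu2]; omega
      have hSa : R.S i * R.wordProd a = u := by
        rw [← hu2, ← mul_assoc, S_mul_S hR, one_mul]
      have hneg : (R.wordProd a)⁻¹ (R.α i) ∉ R.pos := by
        intro hp
        have := len_S_mul_gt hR haW hp
        rw [hSa] at this
        omega
      obtain ⟨a', hsub'', hprod''⟩ := sub_exchange hR hsub' hneg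
      rw [hSa] at hprod''
      exact ⟨r, hrred, hrprod, a', hsub'', hprod''⟩
  · -- len u = len (S i u) + 1 ; take v = S i * u
    have hSuW : R.S i * u ∈ R.weylGroup := mul_mem (S_mem i) huW
    have hSSu : R.S i * (R.S i * u) = u := by
      rw [← mul_assoc, S_mul_S hR, one_mul]
    refine ⟨R.S i * u, hSuW, ?_, Or.inr hSSu.symm, by rw [hSSu]; omega⟩
    rcases List.sublist_cons_iff.mp hlsub with hsub' | ⟨a, rfl, hsub'⟩
    · have hneg : (R.wordProd l')⁻¹ (R.α i) ∉ R.pos := by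
        rw [hlprod]
        intro hp
        have := len_S_mul_gt hR huW hp
        omega
      obtain ⟨a', hsub'', hprod''⟩ := sub_exchange hR hsub' hneg
      rw [hlprod] at hprod''
      exact ⟨r, hrred, hrprod, a', hsub'', hprod''⟩
    · have hu2 : R.S i * u = R.wordProd a := by
        rw [← hlprod, wordProd_cons, ← mul_assoc, S_mul_S hR, one_mul]
      exact ⟨r, hrred, hrprod, a, hsub', hu2.symm⟩

/-- Bruhat order below `s_i w` implies Bruhat order below `w`, when
`len (s_i w) < len w`. -/
lemma bruhat_of_bruhat_S {v w : R.Aut} {i : Fin R.r}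
    (hlt : R.len (R.S i * w) + 1 = R.len w) (hv : R.BruhatLE v (R.S i * w)) :
    R.BruhatLE v w := by
  obtain ⟨m, hmred, hmprod, m', hmsub, hmprod'⟩ := hv
  refine ⟨i :: m, ?_, ?_, m', hmsub.trans (List.sublist_cons_self i m), hmprod'⟩
  · rw [Reduced, wordProd_cons, hmprod, ← mul_assoc, S_mul_S hR, one_mul,
      List.length_cons]
    rw [Reduced] at hmred
    rw [hmprod] at hmred
    omega
  · rw [wordProd_cons, hmprod, ← mul_assoc, S_mul_S hR, one_mul]

lemma weyl_finite : (R.weylGroup : Set R.Aut).Finite := by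
  haveI : Finite ↥R.Φ := hR.finite.to_subtype
  haveI : Finite ↥R.weylGroup := by
    let f : ↥R.weylGroup → (↥R.Φ → ↥R.Φ) := fun g β =>
      ⟨(g : R.Aut) β.1, weyl_stable hR g.2 β.2⟩
    apply Finite.of_injective f
    intro g g' hgg
    apply Subtype.ext
    apply LinearEquiv.toLinearMap_injective
    apply LinearMap.ext_on hR.span_top
    intro x hx
    have := congrFun hgg ⟨x, hx⟩
    exact congrArg Subtype.val this
  exact Set.toFinite _

/-- A Weyl-invariant positive definite form computing signs of coroots. -/
lemma exists_form : ∃ B : R.V → R.V → ℚ,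
    (∀ x y, B x y = B y x) ∧
    (∀ x y z, B x (y + z) = B x y + B x z) ∧
    (∀ (c : ℚ) (x y : R.V), B x (c • y) = c * B x y) ∧
    (∀ g ∈ R.weylGroup, ∀ x y, B (g x) (g y) = B x y) ∧
    (∀ x, x ≠ 0 → 0 < B x x) := by
  haveI : Module.Finite ℚ R.V := by
    refine ⟨⟨hR.finite.toFinset, ?_⟩⟩
    rw [Set.Finite.coe_toFinset]
    exact hR.span_top
  let b := Module.finBasis ℚ R.V
  haveI : Finite ↥R.weylGroup := by
    haveI : Finite ↥R.Φ := hR.finite.to_subtype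
    let f : ↥R.weylGroup → (↥R.Φ → ↥R.Φ) := fun g β =>
      ⟨(g : R.Aut) β.1, weyl_stable hR g.2 β.2⟩
    apply Finite.of_injective f
    intro g g' hgg
    apply Subtype.ext
    apply LinearEquiv.toLinearMap_injective
    apply LinearMap.ext_on hR.span_top
    intro x hx
    exact congrArg Subtype.val (congrFun hgg ⟨x, hx⟩)
  haveI : Fintype ↥R.weylGroup := Fintype.ofFinite _
  set B₀ : R.V → R.V → ℚ := fun x y => ∑ k, b.repr x k * b.repr y k with hB₀
  have hB₀symm : ∀ x y, B₀ x y = B₀ y x := by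
    intro x y
    exact Finset.sum_congr rfl fun k _ => mul_comm _ _
  have hB₀add : ∀ x y z, B₀ x (y + z) = B₀ x y + B₀ x z := by
    intro x y z
    rw [hB₀]
    simp only [map_add, Finsupp.add_apply, mul_add]
    exact Finset.sum_add_distrib
  have hB₀smul : ∀ (c : ℚ) (x y : R.V), B₀ x (c • y) = c * B₀ x y := by
    intro c x y
    rw [hB₀]
    simp only [map_smul, Finsupp.smul_apply, smul_eq_mul, Finset.mul_sum]
    exact Finset.sum_congr rfl fun k _ => by ring
  have hB₀pos : ∀ x, x ≠ 0 → 0 < B₀ x x := by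
    intro x hx
    have hne : b.repr x ≠ 0 := by
      intro h
      exact hx (by simpa using (LinearEquiv.map_eq_zero_iff b.repr).mp h)
    obtain ⟨k, hk⟩ := Finsupp.ne_iff.mp hne
    apply Finset.sum_pos'
    · intro m _
      exact mul_self_nonneg _
    · exact ⟨k, Finset.mem_univ k, mul_self_pos.mpr (by simpa using hk)⟩
  refine ⟨fun x y => ∑ g : ↥R.weylGroup, B₀ ((g : R.Aut) x) ((g : R.Aut) y),
    ?_, ?_, ?_, ?_, ?_⟩
  · intro x y
    exact Finset.sum_congr rfl fun g _ => hB₀symm _ _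
  · intro x y z
    simp only [map_add]
    rw [← Finset.sum_add_distrib]
    exact Finset.sum_congr rfl fun g _ => hB₀add _ _ _
  · intro c x y
    simp only [map_smul]
    rw [Finset.mul_sum]
    exact Finset.sum_congr rfl fun g _ => hB₀smul _ _ _
  · intro g hg x y
    apply Fintype.sum_equiv (Equiv.mulRight (⟨g, hg⟩ : ↥R.weylGroup))
    intro g'
    have h1 : ((g' * ⟨g, hg⟩ : ↥R.weylGroup) : R.Aut) x = (g' : R.Aut) (g x) := rfl
    have h2 : ((g' * ⟨g, hg⟩ : ↥R.weylGroup) : R.Aut) y = (g' : R.Aut) (g y) := rfl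
    rw [Equiv.coe_mulRight, h1, h2]
  · intro x hx
    apply Finset.sum_pos'
    · intro g _
      rcases eq_or_ne ((g : R.Aut) x) 0 with h | h
      · rw [h]
        simp [hB₀]
      · exact le_of_lt (hB₀pos _ h)
    · refine ⟨1, Finset.mem_univ _, ?_⟩
      have h1 : ((1 : ↥R.weylGroup) : R.Aut) x = x := rfl
      rw [h1]
      exact hB₀pos x hx

/-- Key positivity: if `len v < len (s_i v)` and `lam` is dominant, then
`⟨v lam, α_i^∨⟩ ≥ 0`. -/
lemma dom_coroot_nonneg {lam : R.V} (hdom : R.Dominant lam) {v : R.Aut}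
    (hv : v ∈ R.weylGroup) {i : Fin R.r} (h : R.len v < R.len (R.S i * v)) :
    0 ≤ R.coroot (R.α i) (v lam) := by
  obtain ⟨B, hsymm, hadd, hsmul, hinv, hpos⟩ := exists_form hR
  have hzero : ∀ x : R.V, B x 0 = 0 := by
    intro x
    have := hsmul 0 x 0
    simpa using this
  have hsub : ∀ x y z : R.V, B x (y - z) = B x y - B x z := by
    intro x y z
    have : y - z = y + (-1 : ℚ) • z := by module
    rw [this, hadd, hsmul]
    ring
  -- coroot formula : coroot (α j) x * B (α j) (α j) = 2 * B x (α j)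
  have hcor : ∀ (j : Fin R.r) (x : R.V),
      R.coroot (R.α j) x * B (R.α j) (R.α j) = 2 * B x (R.α j) := by
    intro j x
    have h1 : B (R.S j x) (R.S j (R.α j)) = B x (R.α j) := hinv _ (S_mem j) x (R.α j)
    have hSj : R.S j (R.α j) = -R.α j := s_apply_self hR (hR.simple_mem j)
    rw [hSj] at h1
    have h2 : B (R.S j x) (-(R.α j)) = -B (R.S j x) (R.α j) := by
      have : -(R.α j) = (-1 : ℚ) • R.α j := by module
      rw [this, hsmul]
      ring
    rw [h2] at h1
    have h3 : B (R.S j x) (R.α j) = B x (R.α j)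
        - R.coroot (R.α j) x * B (R.α j) (R.α j) := by
      rw [S_apply hR, hsymm, hsub, hsmul, hsymm (R.α j) x]
    rw [h3] at h1
    linarith
  -- positivity of B lam γ for positive roots γ
  have hdompos : ∀ γ ∈ R.pos, 0 ≤ B lam γ := by
    intro γ hγ
    obtain ⟨c, hc0, hcsum⟩ := hR.pos_nonneg_comb γ hγ
    rw [hcsum]
    have hsum : ∀ s : Finset (Fin R.r), B lam (∑ k ∈ s, c k • R.α k)
        = ∑ k ∈ s, c k * B lam (R.α k) := by
      intro s
      induction s using Finset.induction with
      | empty => simpa using hzero lam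
      | insert _ _ hnotmem ih =>
          rw [Finset.sum_insert hnotmem, Finset.sum_insert hnotmem, hadd, hsmul, ih]
    rw [hsum]
    apply Finset.sum_nonneg
    intro k _
    have hBk : 0 ≤ B lam (R.α k) := by
      have := hcor k lam
      have hα : 0 < B (R.α k) (R.α k) :=
        hpos _ (hR.ne_zero _ (hR.simple_mem k))
      have hd := hdom k
      nlinarith
    exact mul_nonneg (hc0 k) hBk
  -- v⁻¹ α_i is a positive root
  have hγpos : v⁻¹ (R.α i) ∈ R.pos := (pos_iff_len_lt hR hv i).mpr h
  have hvγ : v (v⁻¹ (R.α i)) = R.α i := apply_inv_apply v (R.α i)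
  have h4 : B (v lam) (R.α i) = B lam (v⁻¹ (R.α i)) := by
    rw [← hvγ]
    rw [hinv v hv]
    rw [hvγ]
  have h5 := hcor i (v lam)
  have h6 := hdompos _ hγpos
  have hα : 0 < B (R.α i) (R.α i) := hpos _ (hR.ne_zero _ (hR.simple_mem i))
  nlinarith

end RootData

theorem statement19 (R : RootData) (hR : R.IsRootSystem)
    (lam : R.V) (hdom : R.Dominant lam)
    (w : R.Aut) (hw : w ∈ R.weylGroup) (i : Fin R.r)
    (hlen : R.len (R.S i * w) + 1 = R.len w)
    (mu' : R.V) (hmem : mu' ∈ R.demPolytope lam w)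
    (hmax : ∀ k : ℚ, mu' + k • R.α i ∈ R.demPolytope lam w → k ≤ 0) :
    mu' ∈ R.demPolytope lam (R.S i * w) ∧
      ∀ k : ℚ, mu' + k • R.α i ∈ R.demPolytope lam (R.S i * w) → k ≤ 0 := by
  classical
  have hsubP : R.demPolytope lam (R.S i * w) ⊆ R.demPolytope lam w := by
    apply convexHull_mono
    rintro m ⟨u, huW, huB, rfl⟩
    exact ⟨u, huW, RootData.bruhat_of_bruhat_S hR hlen huB, rfl⟩
  set T : Set R.V := {x | ∃ p ∈ R.demPolytope lam (R.S i * w),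
    ∃ c : ℚ, 0 ≤ c ∧ x = p - c • R.α i} with hT
  have hTconv : Convex ℚ T := by
    rintro x ⟨p, hp, c, hc, rfl⟩ y ⟨q, hq, d, hd, rfl⟩ a b ha hb hab
    refine ⟨a • p + b • q, ?_, a * c + b * d,
      add_nonneg (mul_nonneg ha hc) (mul_nonneg hb hd), ?_⟩
    · exact (convex_convexHull ℚ _) hp hq ha hb hab
    · simp only [smul_sub, smul_smul]
      module
  have hGsub : {m | ∃ u : R.Aut, u ∈ R.weylGroup ∧ R.BruhatLE u w ∧ m = u lam} ⊆ T := by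
    rintro m ⟨u, huW, huB, rfl⟩
    obtain ⟨v, hvW, hvB, hcase, hvlen⟩ := RootData.bruhat_lift hR hw hlen huB
    have hvP : v lam ∈ R.demPolytope lam (R.S i * w) :=
      subset_convexHull ℚ _ ⟨v, hvW, hvB, rfl⟩
    rcases hcase with rfl | rfl
    · exact ⟨u lam, hvP, 0, le_rfl, by rw [zero_smul, sub_zero]⟩
    · refine ⟨v lam, hvP, R.coroot (R.α i) (v lam),
        RootData.dom_coroot_nonneg hR hdom hvW hvlen, ?_⟩
      show (R.S i * v) lam = v lam - _ • R.α i
      rw [RootData.mul_apply, RootData.S_apply hR]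
  have hmuT : mu' ∈ T := convexHull_min hGsub hTconv hmem
  obtain ⟨p, hp, c, hc0, heq⟩ := hmuT
  have hpc : mu' + c • R.α i = p := by
    rw [heq]
    module
  have hcle : c ≤ 0 := hmax c (by rw [hpc]; exact hsubP hp)
  have hceq : c = 0 := le_antisymm hcle hc0
  have hmu : mu' ∈ R.demPolytope lam (R.S i * w) := by
    rw [heq, hceq, zero_smul, sub_zero]
    exact hp
  exact ⟨hmu, fun k hk => hmax k (hsubP hk)⟩
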